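/- The function u defined by u(t,x) = −2t if x ≤ −t², u(t,x) = 2x/t if |x| < t² (t > 0), u(t,x) = 2t if x ≥ t², satisfies the energy conservation law (u_x²)_t + (u u_x²)_x = 0 in distributional sense on (0,∞) × ℝ: for every test function φ ∈ C_c^1((0,∞) × ℝ), ∫₀^∞ ∫_ℝ ( u_x(t,x)² φ_t(t,x) + u(t,x) u_x(t,x)² φ_x(t,x) ) dx dt = 0. -/

import Mathlib

open MeasureTheory

/-- The weak solution `u(t,x) = -2t` for `x ≤ -t²`, `2x/t` for `|x| < t²`, `2t` for `x ≥ t²`. -/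
noncomputable def uHS (t x : ℝ) : ℝ :=
  if x ≤ -t ^ 2 then -2 * t else if x < t ^ 2 then 2 * x / t else 2 * t

/-- Its spatial derivative: `2/t` on `(-t², t²)`, `0` outside. -/
noncomputable def uHSx (t x : ℝ) : ℝ :=
  if |x| < t ^ 2 then 2 / t else 0

/-- The solution `uHS` satisfies the energy conservation law `(u_x²)_t + (u u_x²)_x = 0`
in distributional sense on `(0,∞) × ℝ`. -/
theorem energy_conservation_distributional :
    ∀ φ : ℝ × ℝ → ℝ, ContDiff ℝ 1 φ → HasCompactSupport φ →
      tsupport φ ⊆ Set.Ioi 0 ×ˢ Set.univ →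
      (∫ t in Set.Ioi (0 : ℝ), ∫ x : ℝ,
        ((uHSx t x) ^ 2 * deriv (fun s => φ (s, x)) t
          + uHS t x * (uHSx t x) ^ 2 * deriv (fun y => φ (t, y)) x)) = 0 := by
  intro φ hφ hφc hsupp
  set L : ℝ × ℝ → (ℝ × ℝ →L[ℝ] ℝ) := fderiv ℝ φ with hLdef
  have hdiff : Differentiable ℝ φ := hφ.differentiable one_ne_zero
  have hLcont : Continuous L := hφ.continuous_fderiv one_ne_zero
  -- partial derivatives as fderiv applications
  have hDt : ∀ t x : ℝ, HasDerivAt (fun s => φ (s, x)) (L (t, x) (1, 0)) t := by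
    intro t x
    have h1 : HasDerivAt (fun s : ℝ => (s, x)) ((1 : ℝ), (0 : ℝ)) t :=
      (hasDerivAt_id t).prodMk (hasDerivAt_const t x)
    exact (hdiff (t, x)).hasFDerivAt.comp_hasDerivAt t h1
  have hDx : ∀ t x : ℝ, HasDerivAt (fun y => φ (t, y)) (L (t, x) (0, 1)) x := by
    intro t x
    have h1 : HasDerivAt (fun y : ℝ => (t, y)) ((0 : ℝ), (1 : ℝ)) x :=
      (hasDerivAt_const x t).prodMk (hasDerivAt_id x)
    exact (hdiff (t, x)).hasFDerivAt.comp_hasDerivAt x h1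
  -- global bound on the derivative
  obtain ⟨C, hC⟩ : ∃ C, ∀ z, ‖L z‖ ≤ C :=
    (hφc.fderiv ℝ).exists_bound_of_continuous hLcont
  have hC0 : 0 ≤ C := le_trans (norm_nonneg _) (hC (0, 0))
  -- support bounds in time
  obtain ⟨p, q, hp, hpq, hK⟩ : ∃ p q : ℝ, 0 < p ∧ p ≤ q ∧
      ∀ t, t ∉ Set.Icc p q → ∀ x : ℝ, (t, x) ∉ tsupport φ := by
    by_cases hne : (tsupport φ).Nonempty
    · set K1 : Set ℝ := Prod.fst '' tsupport φ with hK1def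
      have hK1c : IsCompact K1 := hφc.image continuous_fst
      have hK1ne : K1.Nonempty := hne.image _
      have hK1pos : ∀ y ∈ K1, 0 < y := by
        rintro y ⟨z, hz, rfl⟩
        exact (hsupp hz).1
      refine ⟨sInf K1, sSup K1, hK1pos _ (hK1c.sInf_mem hK1ne), ?_, ?_⟩
      · exact csInf_le_csSup hK1ne hK1c.bddBelow hK1c.bddAbove
      · intro t ht x hmem
        exact ht ⟨csInf_le hK1c.bddBelow ⟨(t, x), hmem, rfl⟩,
          le_csSup hK1c.bddAbove ⟨(t, x), hmem, rfl⟩⟩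
    · exact ⟨1, 1, one_pos, le_rfl, fun t _ x hmem =>
        hne ⟨(t, x), hmem⟩⟩
  have hφ0 : ∀ t, t ∉ Set.Icc p q → ∀ x : ℝ, φ (t, x) = 0 := fun t ht x =>
    image_eq_zero_of_notMem_tsupport (hK t ht x)
  have hL0 : ∀ t, t ∉ Set.Icc p q → ∀ x : ℝ, L (t, x) = 0 := by
    intro t ht x
    have hop : IsOpen (tsupport φ)ᶜ := (isClosed_tsupport φ).isOpen_compl
    have hev : φ =ᶠ[nhds (t, x)] (fun _ => (0 : ℝ)) :=
      Filter.eventually_of_mem (hop.mem_nhds (hK t ht x))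
        (fun y hy => image_eq_zero_of_notMem_tsupport hy)
    rw [hLdef, hev.fderiv_eq, fderiv_const_apply]
  -- the post-substitution quantities
  set I : ℝ → ℝ := fun t => 4 * ∫ y in (-1 : ℝ)..1,
    (L (t, t ^ 2 * y) (1, 0) + 2 * t * y * L (t, t ^ 2 * y) (0, 1)) with hIdef
  set G : ℝ → ℝ := fun t => 4 * ∫ y in (-1 : ℝ)..1, φ (t, t ^ 2 * y) with hGdef
  -- joint continuity of the integrand of I
  have hcurve : Continuous (fun z : ℝ × ℝ => (z.1, z.1 ^ 2 * z.2)) := by fun_prop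
  have hIint : Continuous (Function.uncurry fun t y : ℝ =>
      (L (t, t ^ 2 * y) (1, 0) + 2 * t * y * L (t, t ^ 2 * y) (0, 1))) := by
    apply Continuous.add
    · exact (hLcont.comp hcurve).clm_apply continuous_const
    · exact ((continuous_const.mul continuous_fst).mul continuous_snd).mul
        ((hLcont.comp hcurve).clm_apply continuous_const)
  have hIcont : Continuous I := by
    apply continuous_const.mul
    exact intervalIntegral.continuous_parametric_intervalIntegral_of_continuous' hIint _ _
  -- G has derivative I everywhere
  have hG : ∀ t : ℝ, HasDerivAt G (I t) t := by
    intro t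
    have hcont : ∀ s : ℝ, Continuous (fun y : ℝ => φ (s, s ^ 2 * y)) := by
      intro s; exact hφ.continuous.comp (by fun_prop)
    have hF'cont : Continuous (fun y : ℝ =>
        L (t, t ^ 2 * y) (1, 0) + 2 * t * y * L (t, t ^ 2 * y) (0, 1)) := by
      apply Continuous.add
      · exact (hLcont.comp (by fun_prop)).clm_apply continuous_const
      · exact (by fun_prop : Continuous fun y : ℝ => 2 * t * y).mul
          ((hLcont.comp (by fun_prop)).clm_apply continuous_const)
    have hdiff' : ∀ y : ℝ, ∀ x : ℝ, HasDerivAt (fun s : ℝ => φ (s, s ^ 2 * y))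
        (L (x, x ^ 2 * y) (1, 0) + 2 * x * y * L (x, x ^ 2 * y) (0, 1)) x := by
      intro y x
      have h1 : HasDerivAt (fun s : ℝ => (s, s ^ 2 * y)) ((1 : ℝ), 2 * x * y) x := by
        refine (hasDerivAt_id x).prodMk ?_
        have := (hasDerivAt_pow 2 x).mul_const y
        simpa [mul_comm, mul_assoc] using this
      have h2 := (hdiff (x, x ^ 2 * y)).hasFDerivAt.comp_hasDerivAt x h1
      rw [← hLdef] at h2
      have h3 : ((1 : ℝ), 2 * x * y) = ((1 : ℝ), (0 : ℝ)) + (2 * x * y) • ((0 : ℝ), (1 : ℝ)) := by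
        simp [Prod.ext_iff]
      rw [h3, map_add, ContinuousLinearMap.map_smul, smul_eq_mul] at h2
      exact h2
    have hbound : ∀ᵐ y : ℝ ∂(volume : Measure ℝ), y ∈ Set.uIoc (-1 : ℝ) 1 →
        ∀ x ∈ Metric.ball t 1,
        ‖L (x, x ^ 2 * y) (1, 0) + 2 * x * y * L (x, x ^ 2 * y) (0, 1)‖
          ≤ C + 2 * (|t| + 1) * C := by
      refine Filter.Eventually.of_forall fun y hy x hx => ?_
      have hy1 : |y| ≤ 1 := by
        rw [Set.uIoc_of_le (by norm_num : (-1 : ℝ) ≤ 1)] at hy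
        rw [abs_le]
        exact ⟨le_of_lt hy.1, hy.2⟩
      have hx1 : |x| ≤ |t| + 1 := by
        have h1 : |x - t| < 1 := mem_ball_iff_norm.mp hx
        have h2 : |x| - |t| ≤ |x - t| := abs_sub_abs_le_abs_sub x t
        linarith
      have e1 : ‖L (x, x ^ 2 * y) ((1 : ℝ), (0 : ℝ))‖ ≤ C := by
        refine le_trans (ContinuousLinearMap.le_opNorm _ _) ?_
        have hn : ‖((1 : ℝ), (0 : ℝ))‖ = 1 := by simp [Prod.norm_def]
        rw [hn, mul_one]
        exact hC _
      have e2 : ‖L (x, x ^ 2 * y) ((0 : ℝ), (1 : ℝ))‖ ≤ C := by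
        refine le_trans (ContinuousLinearMap.le_opNorm _ _) ?_
        have hn : ‖((0 : ℝ), (1 : ℝ))‖ = 1 := by simp [Prod.norm_def]
        rw [hn, mul_one]
        exact hC _
      have e3 : ‖L (x, x ^ 2 * y) (1, 0) + 2 * x * y * L (x, x ^ 2 * y) (0, 1)‖
          ≤ ‖L (x, x ^ 2 * y) ((1 : ℝ), (0 : ℝ))‖
            + ‖2 * x * y‖ * ‖L (x, x ^ 2 * y) ((0 : ℝ), (1 : ℝ))‖ := by
        refine le_trans (norm_add_le _ _) (le_of_eq ?_)
        rw [norm_mul]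
      have e4 : ‖2 * x * y‖ ≤ 2 * (|t| + 1) := by
        rw [Real.norm_eq_abs, abs_mul, abs_mul]
        have h2 : |(2 : ℝ)| = 2 := by norm_num
        rw [h2]
        have h3 : 2 * |x| * |y| ≤ 2 * (|t| + 1) * 1 := by
          apply mul_le_mul ?_ hy1 (abs_nonneg _) (by positivity)
          nlinarith [abs_nonneg x]
        linarith
      have e5 : ‖2 * x * y‖ * ‖L (x, x ^ 2 * y) ((0 : ℝ), (1 : ℝ))‖ ≤ 2 * (|t| + 1) * C :=
        mul_le_mul e4 e2 (norm_nonneg _) (by positivity)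
      linarith
    have key := intervalIntegral.hasDerivAt_integral_of_dominated_loc_of_deriv_le
      (F := fun x y => φ (x, x ^ 2 * y))
      (F' := fun x y => L (x, x ^ 2 * y) (1, 0) + 2 * x * y * L (x, x ^ 2 * y) (0, 1))
      (x₀ := t) (a := (-1 : ℝ)) (b := 1) (μ := volume)
      (bound := fun _ => C + 2 * (|t| + 1) * C) (Metric.ball_mem_nhds t one_pos)
      (Filter.Eventually.of_forall fun x => (hcont x).aestronglyMeasurable)
      ((hcont t).intervalIntegrable _ _)
      hF'cont.aestronglyMeasurable
      hbound (intervalIntegrable_const)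
      (Filter.Eventually.of_forall fun y _ x _ => hdiff' y x)
    have hfin := key.2.const_mul (4 : ℝ)
    rw [hGdef, hIdef]
    exact hfin
  -- the inner integral equals I t for t > 0
  have hA : ∀ t : ℝ, 0 < t → (∫ x : ℝ,
      ((uHSx t x) ^ 2 * deriv (fun s => φ (s, x)) t
        + uHS t x * (uHSx t x) ^ 2 * deriv (fun y => φ (t, y)) x)) = I t := by
    intro t ht
    have ht' : t ≠ 0 := ne_of_gt ht
    have ht2 : (0 : ℝ) < t ^ 2 := by positivity
    -- the continuous "inside" integrand
    set g : ℝ → ℝ := fun x => (2 / t) ^ 2 * L (t, x) (1, 0)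
        + (2 * x / t) * (2 / t) ^ 2 * L (t, x) (0, 1) with hgdef
    have hgcont : Continuous g := by
      apply Continuous.add
      · exact continuous_const.mul ((hLcont.comp (by fun_prop)).clm_apply continuous_const)
      · exact ((by fun_prop : Continuous fun x : ℝ => 2 * x / t).mul continuous_const).mul
          ((hLcont.comp (by fun_prop)).clm_apply continuous_const)
    -- rewrite pointwise as an indicator function
    have hpt : (fun x : ℝ => (uHSx t x) ^ 2 * deriv (fun s => φ (s, x)) t
          + uHS t x * (uHSx t x) ^ 2 * deriv (fun y => φ (t, y)) x)
        = (Set.Ioo (-t ^ 2) (t ^ 2)).indicator g := by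
      funext x
      rw [(hDt t x).deriv, (hDx t x).deriv]
      by_cases hx : |x| < t ^ 2
      · have hmem : x ∈ Set.Ioo (-t ^ 2) (t ^ 2) := by
          rw [Set.mem_Ioo]; constructor <;> [exact neg_lt_of_abs_lt hx; exact lt_of_abs_lt hx]
        rw [Set.indicator_of_mem hmem, hgdef]
        have h1 : uHSx t x = 2 / t := by rw [uHSx, if_pos hx]
        have h2 : uHS t x = 2 * x / t := by
          rw [uHS, if_neg (not_le.mpr (neg_lt_of_abs_lt hx)), if_pos (lt_of_abs_lt hx)]
        rw [h1, h2]
      · have hmem : x ∉ Set.Ioo (-t ^ 2) (t ^ 2) := by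
          rw [Set.mem_Ioo]
          intro h
          exact hx (abs_lt.mpr ⟨h.1, h.2⟩)
        rw [Set.indicator_of_notMem hmem]
        have h1 : uHSx t x = 0 := by rw [uHSx, if_neg hx]
        rw [h1]
        ring
    rw [hpt, integral_indicator measurableSet_Ioo, ← integral_Ioc_eq_integral_Ioo,
      ← intervalIntegral.integral_of_le (by linarith : -t ^ 2 ≤ t ^ 2)]
    -- substitution x = t² y
    have hsubst : (∫ x in (-t ^ 2)..(t ^ 2), g x)
        = ∫ y in (-1 : ℝ)..1, (t ^ 2) • g (t ^ 2 * y) := by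
      rw [intervalIntegral.integral_smul]
      rw [intervalIntegral.smul_integral_comp_mul_left g (t ^ 2)]
      norm_num
    rw [hsubst, hIdef]
    show _ = 4 * ∫ y in (-1 : ℝ)..1,
        (L (t, t ^ 2 * y) (1, 0) + 2 * t * y * L (t, t ^ 2 * y) (0, 1))
    rw [← intervalIntegral.integral_const_mul]
    apply intervalIntegral.integral_congr
    intro y _
    simp only [smul_eq_mul, hgdef]
    have : 2 * (t ^ 2 * y) / t * (2 / t) ^ 2 = 8 * y / t := by
      field_simp; ring
    rw [this]
    field_simp
    ring
  -- I vanishes off Icc p q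
  have hI0 : ∀ t, t ∉ Set.Icc p q → I t = 0 := by
    intro t ht
    rw [hIdef]
    have : ∀ y : ℝ, (L (t, t ^ 2 * y) (1, 0) + 2 * t * y * L (t, t ^ 2 * y) (0, 1)) = 0 := by
      intro y; rw [hL0 t ht]; simp
    simp [this]
  have hG0 : ∀ t, t ∉ Set.Icc p q → G t = 0 := by
    intro t ht
    rw [hGdef]
    simp only [hφ0 t ht]
    simp
  -- assemble
  set c : ℝ := p / 2 with hcdef
  set d : ℝ := q + 1 with hddef
  have hcd : c ≤ d := by rw [hcdef, hddef]; linarith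
  have hcnot : c ∉ Set.Icc p q := by
    intro h; rw [hcdef] at h; have := h.1; linarith
  have hdnot : d ∉ Set.Icc p q := by
    intro h; rw [hddef] at h; have := h.2; linarith
  have hsub : ∀ t, t ∉ Set.Ioc c d → t ∉ Set.Icc p q := by
    intro t ht hmem
    exact ht ⟨by rw [hcdef]; linarith [hmem.1], by rw [hddef]; linarith [hmem.2]⟩
  calc (∫ t in Set.Ioi (0 : ℝ), ∫ x : ℝ,
        ((uHSx t x) ^ 2 * deriv (fun s => φ (s, x)) t
          + uHS t x * (uHSx t x) ^ 2 * deriv (fun y => φ (t, y)) x))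
      = ∫ t in Set.Ioi (0 : ℝ), I t := by
        apply setIntegral_congr_fun measurableSet_Ioi
        intro t ht
        exact hA t ht
    _ = ∫ t : ℝ, I t := by
        apply setIntegral_eq_integral_of_forall_compl_eq_zero
        intro t ht
        apply hI0
        intro hmem
        exact ht (lt_of_lt_of_le hp hmem.1)
    _ = ∫ t in Set.Ioc c d, I t := by
        symm
        apply setIntegral_eq_integral_of_forall_compl_eq_zero
        intro t ht
        exact hI0 t (hsub t ht)
    _ = ∫ t in c..d, I t := (intervalIntegral.integral_of_le hcd).symm
    _ = G d - G c := intervalIntegral.integral_eq_sub_of_hasDerivAt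
        (fun t _ => hG t) (hIcont.intervalIntegrable c d)
    _ = 0 := by rw [hG0 c hcnot, hG0 d hdnot, sub_zero]
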